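/- Let q be odd, s even with 4 ≤ s ≤ q−1, and let λ = (q,…,q,s) ∈ 𝒫₋₁(n) (with q repeated an even number of times m) and η = (q,…,q,s−2,2) (q repeated m times). Then η < λ in the dominance order, and the pair (λ,η) reduces, by erasing the m common rows (q,…,q), to the irreducible pair λ' = (s), η' = (s−2,2), and moreover η is a minimal degeneration of λ in 𝒫₋₁(n): there is no ν ∈ 𝒫₋₁(n) with η < ν < λ. -/

import Mathlib

/-- A partition of `n`: weakly decreasing list of positive integers summing to `n`. -/
def IsPartition (l : List ℕ) (n : ℕ) : Prop :=
  l.Pairwise (· ≥ ·) ∧ (∀ x ∈ l, 0 < x) ∧ l.sum = n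

/-- Dominance order: `Dominates l m` means `l ≥ m`. -/
def Dominates (l m : List ℕ) : Prop := ∀ k, (m.take k).sum ≤ (l.take k).sum

/-- Strict dominance. -/
def StrictDom (l m : List ℕ) : Prop := Dominates l m ∧ l ≠ m

lemma sum_take_append (c l : List ℕ) (k : ℕ) :
    ((c ++ l).take k).sum = (c.take k).sum + (l.take (k - c.length)).sum := by
  rw [List.take_append, List.sum_append]

lemma sum_take_replicate (m q k : ℕ) :
    ((List.replicate m q).take k).sum = min k m * q := by
  rw [List.take_replicate, List.sum_replicate, smul_eq_mul]

/-- For `q` odd, `s` even with `4 ≤ s ≤ q−1`, `λ = (q,…,q,s)` (with `q` repeated an even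
number `m` of times) and `η = (q,…,q,s−2,2)`: `η < λ`, erasing the `m` common rows
reduces the pair to the irreducible pair `((s),(s−2,2))`, and `η` is a minimal
degeneration of `λ` in `𝒫₋₁(n)`. -/
theorem stmt_9 (q s m n : ℕ) (hq : Odd q) (hs : Even s) (hm : Even m)
    (h4 : 4 ≤ s) (hsq : s ≤ q - 1) (hn : n = m * q + s) :
    let lam : List ℕ := List.replicate m q ++ [s]
    let eta : List ℕ := List.replicate m q ++ [s - 2, 2]
    StrictDom lam eta ∧ lam.drop m = [s] ∧ eta.drop m = [s - 2, 2] ∧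
    ¬ ∃ nu : List ℕ, IsPartition nu n ∧ (∀ x : ℕ, Odd x → Even (nu.count x)) ∧
        StrictDom lam nu ∧ StrictDom nu eta := by
  intro lam eta
  have hq1 : 1 ≤ q := hq.pos
  have hqs : s + 1 ≤ q := by omega
  have hlamtake : ∀ k, (lam.take k).sum = min k m * q + ([s].take (k - m)).sum := by
    intro k
    show ((List.replicate m q ++ [s]).take k).sum = _
    rw [sum_take_append, sum_take_replicate, List.length_replicate]
  have hetatake : ∀ k, (eta.take k).sum = min k m * q + ([s - 2, 2].take (k - m)).sum := by
    intro k
    show ((List.replicate m q ++ [s - 2, 2]).take k).sum = _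
    rw [sum_take_append, sum_take_replicate, List.length_replicate]
  refine ⟨⟨?_, ?_⟩, ?_, ?_, ?_⟩
  · -- Dominates lam eta
    intro k
    rw [hlamtake, hetatake]
    apply Nat.add_le_add_left
    rcases (k - m) with _ | _ | j <;> simp [List.take] <;> omega
  · -- lam ≠ eta
    intro h
    have := congrArg List.length h
    simp [lam, eta] at this
  · exact List.drop_left' List.length_replicate
  · exact List.drop_left' List.length_replicate
  · -- minimality
    rintro ⟨ν, ⟨hsort, hpos, hsum⟩, hpar, ⟨hd1, hne1⟩, ⟨hd2, hne2⟩⟩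
    -- partial sums of ν are pinched at k*q for k ≤ m
    have hk : ∀ k, k ≤ m → ((ν.take k).sum) = k * q := by
      intro k hkm
      have h1 := hd1 k
      have h2 := hd2 k
      rw [hlamtake] at h1
      rw [hetatake] at h2
      rw [Nat.sub_eq_zero_of_le hkm, min_eq_left hkm] at h1 h2
      simp only [List.take_zero, List.sum_nil, Nat.add_zero] at h1 h2
      omega
    have hlen : m ≤ ν.length := by
      by_contra hcon
      push_neg at hcon
      have ht : ν.take m = ν := List.take_of_length_le (by omega)
      have := hk m le_rfl
      rw [ht, hsum, hn] at this
      omega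
    have hget : ∀ i, (hi : i < m) → ν[i]'(lt_of_lt_of_le hi hlen) = q := by
      intro i hi
      have hss := List.sum_take_succ ν i (lt_of_lt_of_le hi hlen)
      rw [hk i (by omega), hk (i + 1) (by omega)] at hss
      have : i * q + q = i * q + ν[i]'(lt_of_lt_of_le hi hlen) := by
        rw [← hss]; ring
      omega
    have htake : ν.take m = List.replicate m q := by
      apply List.ext_getElem
      · simp [hlen]
      · intro i h1 h2
        rw [List.getElem_take, List.getElem_replicate]
        exact hget i (by simpa [hlen] using h1)
    have hν : ν = List.replicate m q ++ ν.drop m := by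
      rw [← htake, List.take_append_drop]
    set r := ν.drop m with hr
    have hrsum : r.sum = s := by
      have := congrArg List.sum hν
      rw [List.sum_append, List.sum_replicate, smul_eq_mul, hsum, hn] at this
      omega
    have hrpos : ∀ x ∈ r, 0 < x := fun x hx => hpos x (List.mem_of_mem_drop hx)
    have hνtake : ∀ k, (ν.take k).sum = min k m * q + (r.take (k - m)).sum := by
      intro k
      conv_lhs => rw [hν]
      rw [sum_take_append, sum_take_replicate, List.length_replicate]
    -- dominance at positions m+1, m+2
    have h1a := hd1 (m + 1)
    have h2a := hd2 (m + 1)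
    have h2b := hd2 (m + 2)
    rw [hlamtake, hνtake] at h1a
    rw [hetatake, hνtake] at h2a
    rw [hetatake, hνtake] at h2b
    simp only [Nat.add_sub_cancel_left, min_eq_right (Nat.le_add_right m 1),
      min_eq_right (Nat.le_add_right m 2),
      show m + 1 - m = 1 from by omega, show m + 2 - m = 2 from by omega] at h1a h2a h2b
    have hA1 : (r.take 1).sum ≤ s := by simpa using h1a
    have hA2 : s - 2 ≤ (r.take 1).sum := by simpa using h2a
    have hB : s - 2 + 2 ≤ (r.take 2).sum := by simpa using h2b
    rcases r with _ | ⟨a, t⟩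
    · simp at hA2; omega
    · have hacons : a + t.sum = s := by simpa using hrsum
      simp only [List.take, List.sum_cons, List.sum_nil, Nat.add_zero] at hA1 hA2 hB
      -- a ∈ {s-2, s-1, s}
      have haeq : a = s - 2 ∨ a = s - 1 ∨ a = s := by omega
      rcases haeq with ha | ha | ha
      · -- a = s - 2 : then ν = eta
        rcases t with _ | ⟨b, t'⟩
        · simp at hB; omega
        · simp only [List.take, List.sum_cons, List.sum_nil, Nat.add_zero] at hB
          have hb2 : b = 2 ∧ t'.sum = 0 := by
            have hbpos : 0 < b := hrpos b (by simp)
            have : a + (b + t'.sum) = s := by simpa using hacons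
            constructor <;> omega
          have ht' : t' = [] := by
            rcases t' with _ | ⟨c, t''⟩
            · rfl
            · have hcpos : 0 < c := hrpos c (by simp)
              have : c + t''.sum = 0 := by simpa using hb2.2
              omega
          exact hne2 (by rw [hν, ha, hb2.1, ht'])
      · -- a = s - 1 : parity contradiction
        have hodd : Odd (s - 1) := Nat.Even.sub_odd (by omega) hs odd_one
        have hcount := hpar (s - 1) hodd
        rw [hν, List.count_append, List.count_replicate, if_neg (by simp; omega)] at hcount
        rw [← ha, List.count_cons_self] at hcount
        have hctpos : 0 < t.count a := by
          rcases hm with ⟨m', hm'⟩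
          rcases hcount with ⟨c, hc⟩
          omega
        have hmem : a ∈ t := List.count_pos_iff.mp hctpos
        have := List.single_le_sum (l := t) (fun x _ => Nat.zero_le x) a hmem
        omega
      · -- a = s : then ν = lam
        have ht : t = [] := by
          rcases t with _ | ⟨b, t'⟩
          · rfl
          · have hbpos : 0 < b := hrpos b (by simp)
            have : a + (b + t'.sum) = s := by simpa using hacons
            omega
        exact hne1 ((by rw [hν, ha, ht] : ν = lam)).symm
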